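/- Let T : X → X and S : Y → Y be proper maps and f : Y → X a proper surjective map with f ∘ S = T ∘ f. For any admissible covering α of X, the preimage covering f⁻¹(α) = {f⁻¹(A) : A ∈ α} is an admissible covering of Y, and N(αⁿ) = N(f⁻¹(α)ⁿ) for all n. -/

import Mathlib

open Set Filter Topology

/-- A map is proper if it is continuous and preimages of compact sets are compact. -/
def IsProper {X Y : Type*} [TopologicalSpace X] [TopologicalSpace Y] (f : X → Y) : Prop :=
  Continuous f ∧ ∀ K : Set Y, IsCompact K → IsCompact (f ⁻¹' K)

/-- An admissible covering: open, finite, covers, and each element has compact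
closure or compact complement. -/
def IsAdmissibleCover {X : Type*} [TopologicalSpace X] (α : Set (Set X)) : Prop :=
  α.Finite ∧ (∀ A ∈ α, IsOpen A) ∧ ⋃₀ α = univ ∧
    ∀ A ∈ α, IsCompact (closure A) ∨ IsCompact Aᶜ

/-- `coverIter T α n` is the collection of sets `A₀ ∩ T⁻¹ A₁ ∩ ⋯ ∩ T⁻⁽ⁿ⁻¹⁾ A_{n-1}`
with all `Aᵢ ∈ α`; the paper's `αⁿ` is `coverIter T α (n+1)`. -/
def coverIter {X : Type*} (T : X → X) (α : Set (Set X)) (n : ℕ) : Set (Set X) :=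
  {B | ∃ A : Fin n → Set X, (∀ i, A i ∈ α) ∧ B = ⋂ i : Fin n, T^[i.val] ⁻¹' A i}

/-- `coverNum β` is the minimal cardinality of a (finite) subcover of `β`. -/
noncomputable def coverNum {X : Type*} (β : Set (Set X)) : ℕ :=
  sInf {k | ∃ γ ⊆ β, γ.Finite ∧ ⋃₀ γ = univ ∧ γ.ncard = k}

lemma sInf_eq_of_forall_exists_le {A B : Set ℕ}
    (h1 : ∀ k ∈ A, ∃ k' ∈ B, k' ≤ k) (h2 : ∀ k ∈ B, ∃ k' ∈ A, k' ≤ k) :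
    sInf A = sInf B := by
  rcases A.eq_empty_or_nonempty with hA | hA
  · rcases B.eq_empty_or_nonempty with hB | hB
    · rw [hA, hB]
    · obtain ⟨k, hk⟩ := hB
      obtain ⟨k', hk', _⟩ := h2 k hk
      simp [hA] at hk'
  · obtain ⟨k, hk⟩ := hA
    obtain ⟨k', hk', _⟩ := h1 k hk
    apply le_antisymm
    · obtain ⟨m, hm, hle⟩ := h2 (sInf B) (Nat.sInf_mem ⟨k', hk'⟩)
      exact le_trans (Nat.sInf_le hm) hle
    · obtain ⟨m, hm, hle⟩ := h1 (sInf A) (Nat.sInf_mem ⟨k, hk⟩)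
      exact le_trans (Nat.sInf_le hm) hle

lemma coverNum_preimage {X Y : Type*} (f : Y → X) (hsurj : Function.Surjective f)
    (β : Set (Set X)) :
    coverNum ((fun A => f ⁻¹' A) '' β) = coverNum β := by
  symm
  apply sInf_eq_of_forall_exists_le
  · rintro k ⟨γ, hγβ, hγfin, hγcov, rfl⟩
    refine ⟨((fun A => f ⁻¹' A) '' γ).ncard, ⟨(fun A => f ⁻¹' A) '' γ,
      Set.image_mono hγβ, hγfin.image _, ?_, rfl⟩, Set.ncard_image_le hγfin⟩
    rw [Set.sUnion_image]
    rw [show (⋃ A ∈ γ, f ⁻¹' A) = f ⁻¹' (⋃₀ γ) by rw [Set.sUnion_eq_biUnion]; simp,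
      hγcov, Set.preimage_univ]
  · rintro k ⟨δ, hδβ, hδfin, hδcov, rfl⟩
    have : ∀ B ∈ δ, ∃ A ∈ β, f ⁻¹' A = B := fun B hB => hδβ hB
    choose g hg1 hg2 using this
    classical
    let F : Set Y → Set X := fun B => if h : B ∈ δ then g B h else ∅
    have hγsub : F '' δ ⊆ β := by
      rintro _ ⟨B, hB, rfl⟩
      simp only [F, dif_pos hB]
      exact hg1 B hB
    have hγcov : ⋃₀ (F '' δ) = univ := by
      ext x
      simp only [Set.mem_univ, iff_true, Set.mem_sUnion]
      obtain ⟨y, rfl⟩ := hsurj x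
      have : y ∈ ⋃₀ δ := by rw [hδcov]; trivial
      obtain ⟨B, hB, hyB⟩ := this
      refine ⟨g B hB, ⟨B, hB, by simp [F, dif_pos hB]⟩, ?_⟩
      rw [← hg2 B hB] at hyB
      exact hyB
    exact ⟨(F '' δ).ncard, ⟨F '' δ, hγsub, hδfin.image _, hγcov, rfl⟩,
      Set.ncard_image_le hδfin⟩

/-- under a proper surjective semiconjugacy `f`, the preimage of an
admissible covering is admissible and the minimal subcover cardinalities of the
iterated coverings agree. -/
theorem preimage_cover_admissible_and_coverNum_eq {X Y : Type*}
    [TopologicalSpace X] [TopologicalSpace Y]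
    (T : X → X) (S : Y → Y) (f : Y → X)
    (hT : IsProper T) (hS : IsProper S) (hf : IsProper f)
    (hsurj : Function.Surjective f) (hcomm : f ∘ S = T ∘ f)
    (α : Set (Set X)) (hα : IsAdmissibleCover α) :
    IsAdmissibleCover ((fun A => f ⁻¹' A) '' α) ∧
    ∀ n : ℕ, coverNum (coverIter T α n) = coverNum (coverIter S ((fun A => f ⁻¹' A) '' α) n) := by
  obtain ⟨hfin, hopen, hcov, hcpt⟩ := hα
  have hsemi : Function.Semiconj f S T := fun y => congrFun hcomm y
  constructor
  · refine ⟨hfin.image _, ?_, ?_, ?_⟩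
    · rintro _ ⟨A, hA, rfl⟩
      exact (hopen A hA).preimage hf.1
    · rw [Set.sUnion_image,
        show (⋃ A ∈ α, f ⁻¹' A) = f ⁻¹' (⋃₀ α) by rw [Set.sUnion_eq_biUnion]; simp,
        hcov, Set.preimage_univ]
    · rintro _ ⟨A, hA, rfl⟩
      rcases hcpt A hA with h | h
      · left
        refine (hf.2 _ h).of_isClosed_subset isClosed_closure ?_
        exact hf.1.closure_preimage_subset A
      · right
        rw [← Set.preimage_compl]
        exact hf.2 _ h
  · intro n
    have hiter : coverIter S ((fun A => f ⁻¹' A) '' α) n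
        = (fun A => f ⁻¹' A) '' coverIter T α n := by
      ext B
      constructor
      · rintro ⟨A', hA', rfl⟩
        have : ∀ i, ∃ A ∈ α, f ⁻¹' A = A' i := fun i => hA' i
        choose A hA1 hA2 using this
        refine ⟨⋂ i : Fin n, T^[i.val] ⁻¹' A i, ⟨A, hA1, rfl⟩, ?_⟩
        show f ⁻¹' (⋂ i : Fin n, T^[i.val] ⁻¹' A i) = _
        rw [Set.preimage_iInter]
        refine iInter_congr fun i => ?_
        rw [← hA2 i, ← Set.preimage_comp, ← Set.preimage_comp,
          (hsemi.iterate_right i.val).comp_eq]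
      · rintro ⟨_, ⟨A, hA1, rfl⟩, rfl⟩
        refine ⟨fun i => f ⁻¹' A i, fun i => ⟨A i, hA1 i, rfl⟩, ?_⟩
        show f ⁻¹' (⋂ i : Fin n, T^[i.val] ⁻¹' A i) = _
        rw [Set.preimage_iInter]
        refine iInter_congr fun i => ?_
        rw [← Set.preimage_comp, ← Set.preimage_comp, (hsemi.iterate_right i.val).comp_eq]
    rw [hiter, coverNum_preimage f hsurj]
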